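/- Let T be a finite tree with edge lengths d : E → ℝ₊, let u,v be two leaves of T, and fix γ > 0. For all ε > 0 and M > 0 there exists a constant c = c(ε,M,γ) > 0 such that: if d(u,v) < M and σ¹,…,σᵏ are k i.i.d. characters of the CFN model on T with k ≥ c·log n (for any integer n ≥ 2), then with probability at least 1 − n^{−γ} the distance estimator satisfies |d(u,v) − Dist(σ_u,σ_v)| < ε. -/

import Mathlib

open scoped Classical

/-- The ±1 spin value of a Boolean state. -/
def pmVal (b : Bool) : ℝ := if b then 1 else -1

/-- The per-edge CFN factor: along an edge with correlation `c = e^{−2d(e)}`,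
two equal endpoint states get weight `(1+c)/2` and unequal states `(1−c)/2`. -/
noncomputable def cfnEdgeFactor {V : Type*} (σ : V → Bool) (c : ℝ) : Sym2 V → ℝ :=
  Sym2.lift ⟨fun x y => if σ x = σ y then (1 + c) / 2 else (1 - c) / 2,
    fun x y => by
      simp only []
      by_cases h : σ x = σ y
      · rw [if_pos h, if_pos h.symm]
      · rw [if_neg h, if_neg fun hh => h hh.symm]⟩

/-- The CFN probability of a full state assignment `σ : V → Bool` on the tree
`G` with edge lengths `d`. -/
noncomputable def cfnWeight {V : Type*} [Fintype V] (G : SimpleGraph V)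
    (d : Sym2 V → ℝ) (σ : V → Bool) : ℝ :=
  (1 / 2) * ∏ e ∈ (Set.toFinite G.edgeSet).toFinset,
      cfnEdgeFactor σ (Real.exp (-2 * d e)) e

/-! ### Auxiliary lemmas -/

section Aux

variable {V : Type} [Fintype V] [DecidableEq V] {G : SimpleGraph V}

/-- Agreement indicator of a configuration across an (unordered) pair. -/
def agreeB (σ : V → Bool) : Sym2 V → Bool :=
  Sym2.lift ⟨fun x y => σ x == σ y, fun x y => by show (σ x == σ y) = (σ y == σ x); cases σ x <;> cases σ y <;> rfl⟩

lemma agreeB_mk (σ : V → Bool) (x y : V) : agreeB σ s(x, y) = (σ x == σ y) := rfl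

lemma cfnEdgeFactor_eq_agree (σ : V → Bool) (c : ℝ) (e : Sym2 V) :
    cfnEdgeFactor σ c e = if agreeB σ e then (1 + c) / 2 else (1 - c) / 2 := by
  induction e using Sym2.ind with
  | _ x y =>
      rw [agreeB_mk]
      show (if σ x = σ y then (1 + c) / 2 else (1 - c) / 2) = _
      by_cases h : σ x = σ y
      · rw [if_pos h, if_pos (by simpa using h)]
      · rw [if_neg h, if_neg (by simpa using h)]

lemma pmVal_mul (a b : Bool) : pmVal a * pmVal b = pmVal (a == b) := by
  cases a <;> cases b <;> norm_num [pmVal]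

lemma pmVal_trans (a b c : Bool) : pmVal (a == c) = pmVal (a == b) * pmVal (b == c) := by
  cases a <;> cases b <;> cases c <;> norm_num [pmVal]

lemma pmVal_agree_walk (σ : V → Bool) {a b : V} (w : G.Walk a b) :
    pmVal (σ a == σ b) = (w.edges.map fun e => pmVal (agreeB σ e)).prod := by
  induction w with
  | nil => simp [pmVal]
  | @cons a c b hadj q ih =>
      rw [SimpleGraph.Walk.edges_cons, List.map_cons, List.prod_cons, ← ih, agreeB_mk]
      exact pmVal_trans (σ a) (σ c) (σ b)

lemma spin_bijective (hT : G.IsTree) (u₀ : V) :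
    Function.Bijective (fun σ : V → Bool =>
      (σ u₀, fun e : {e : Sym2 V // e ∈ (Set.toFinite G.edgeSet).toFinset} => agreeB σ e.1)) := by
  rw [Fintype.bijective_iff_injective_and_card]
  constructor
  · intro σ σ' h
    have h1 : σ u₀ = σ' u₀ := congrArg Prod.fst h
    have h2 : ∀ e ∈ G.edgeSet, agreeB σ e = agreeB σ' e := by
      intro e he
      exact congrFun (congrArg Prod.snd h) ⟨e, (Set.Finite.mem_toFinset _).2 he⟩
    funext v
    have key : ∀ {a b : V} (w : G.Walk a b), σ a = σ' a → σ b = σ' b := by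
      intro a b w
      induction w with
      | nil => exact id
      | @cons a c b hadj q ih =>
          intro ha
          apply ih
          have he := h2 s(a, c) hadj
          rw [agreeB_mk, agreeB_mk, ha] at he
          cases hx : σ' a <;> cases hc : σ c <;> cases hc' : σ' c <;>
            simp_all
    exact (hT.isConnected.preconnected u₀ v).elim fun w => key w h1
  · rw [Fintype.card_prod, Fintype.card_fun, Fintype.card_fun, Fintype.card_coe,
      Fintype.card_bool]
    have hEF : (Set.toFinite G.edgeSet).toFinset = G.edgeFinset := by
      ext e
      rw [Set.Finite.mem_toFinset, SimpleGraph.mem_edgeFinset]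
    have hcard : (Set.toFinite G.edgeSet).toFinset.card + 1 = Fintype.card V := by
      rw [hEF]; exact hT.card_edgeFinset
    rw [← hcard, pow_succ]; ring

lemma sum_prod_agree (hT : G.IsTree) (u₀ : V) (g : Sym2 V → Bool → ℝ) :
    ∑ σ : V → Bool, ∏ e ∈ (Set.toFinite G.edgeSet).toFinset, g e (agreeB σ e)
      = 2 * ∏ e ∈ (Set.toFinite G.edgeSet).toFinset, (g e true + g e false) := by
  set E := (Set.toFinite G.edgeSet).toFinset with hE
  have hbij := spin_bijective hT u₀
  have htrans := Fintype.sum_bijective _ hbij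
    (fun σ : V → Bool => ∏ e ∈ E, g e (agreeB σ e))
    (fun y : Bool × ({e : Sym2 V // e ∈ E} → Bool) => ∏ e : {e : Sym2 V // e ∈ E}, g e.1 (y.2 e))
    (fun σ => by
      show (∏ e ∈ E, g e (agreeB σ e))
          = ∏ e : {e : Sym2 V // e ∈ E}, g e.1 (agreeB σ e.1)
      rw [← Finset.prod_attach E (fun e => g e (agreeB σ e)), Finset.univ_eq_attach])
  rw [htrans, Fintype.sum_prod_type]
  have hinner :
      (∑ f : {e : Sym2 V // e ∈ E} → Bool, ∏ e : {e : Sym2 V // e ∈ E}, g e.1 (f e))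
        = ∏ e ∈ E, (g e true + g e false) := by
    rw [← Fintype.prod_sum (fun e : {e : Sym2 V // e ∈ E} => fun b : Bool => g e.1 b)]
    rw [← Finset.prod_attach E (fun e => g e true + g e false), Finset.univ_eq_attach]
    exact Finset.prod_congr rfl fun e _ => by simp
  simp only [Fintype.sum_bool]
  rw [hinner]; ring

lemma cfnWeight_nonneg (d : Sym2 V → ℝ) (hd : ∀ e ∈ G.edgeSet, 0 ≤ d e) (σ : V → Bool) :
    0 ≤ cfnWeight G d σ := by
  unfold cfnWeight
  apply mul_nonneg (by norm_num)
  apply Finset.prod_nonneg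
  intro e he
  have he' : e ∈ G.edgeSet := (Set.Finite.mem_toFinset _).1 he
  have h1 : Real.exp (-2 * d e) ≤ 1 := by
    rw [Real.exp_le_one_iff]
    have := hd e he'; linarith
  have h2 : 0 < Real.exp (-2 * d e) := Real.exp_pos _
  rw [cfnEdgeFactor_eq_agree]
  split <;> linarith

lemma sum_cfnWeight (hT : G.IsTree) (u₀ : V) (d : Sym2 V → ℝ) :
    ∑ σ : V → Bool, cfnWeight G d σ = 1 := by
  set E := (Set.toFinite G.edgeSet).toFinset with hE
  set g : Sym2 V → Bool → ℝ := fun e b =>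
    if b then (1 + Real.exp (-2 * d e)) / 2 else (1 - Real.exp (-2 * d e)) / 2 with hg
  have h2 : ∀ σ : V → Bool,
      cfnWeight G d σ = (1 / 2) * ∏ e ∈ E, g e (agreeB σ e) := by
    intro σ
    unfold cfnWeight
    exact congrArg _ (Finset.prod_congr rfl fun e _ => cfnEdgeFactor_eq_agree σ _ e)
  have h4 : ∏ e ∈ E, (g e true + g e false) = 1 :=
    Finset.prod_eq_one fun e _ => by simp [hg]; ring
  calc ∑ σ : V → Bool, cfnWeight G d σ
      = ∑ σ : V → Bool, (1 / 2) * ∏ e ∈ E, g e (agreeB σ e) :=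
        Finset.sum_congr rfl fun σ _ => h2 σ
    _ = (1 / 2) * ∑ σ : V → Bool, ∏ e ∈ E, g e (agreeB σ e) := by rw [← Finset.mul_sum]
    _ = (1 / 2) * (2 * ∏ e ∈ E, (g e true + g e false)) := by rw [sum_prod_agree hT u₀ g]
    _ = 1 := by rw [h4]; ring

lemma list_exp_prod {α : Type*} (f : α → ℝ) (l : List α) :
    (l.map fun e => Real.exp (-2 * f e)).prod = Real.exp (-2 * (l.map f).sum) := by
  induction l with
  | nil => simp
  | cons a l ih =>
      simp only [List.map_cons, List.prod_cons, List.sum_cons, ih, ← Real.exp_add]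
      ring_nf

lemma sum_cfnWeight_corr (hT : G.IsTree) (d : Sym2 V → ℝ) {u v : V}
    (p : G.Walk u v) (hp : p.IsPath) :
    ∑ σ : V → Bool, cfnWeight G d σ * (pmVal (σ u) * pmVal (σ v))
      = Real.exp (-2 * (p.edges.map d).sum) := by
  set E := (Set.toFinite G.edgeSet).toFinset with hEdef
  set P := p.edges.toFinset with hPdef
  have hPE : P ⊆ E := by
    intro e he
    rw [Set.Finite.mem_toFinset]
    exact p.edges_subset_edgeSet (List.mem_toFinset.1 he)
  set c : Sym2 V → ℝ := fun e => Real.exp (-2 * d e) with hcdef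
  have hX : ∀ σ : V → Bool, pmVal (σ u) * pmVal (σ v) = ∏ e ∈ P, pmVal (agreeB σ e) := by
    intro σ
    rw [pmVal_mul, pmVal_agree_walk σ p, hPdef, List.prod_toFinset _ hp.edges_nodup]
  set g : Sym2 V → Bool → ℝ := fun e b =>
    (if b then (1 + c e) / 2 else (1 - c e) / 2) * (if e ∈ P then pmVal b else 1) with hgdef
  have hterm : ∀ σ : V → Bool,
      cfnWeight G d σ * (pmVal (σ u) * pmVal (σ v))
        = (1 / 2) * ∏ e ∈ E, g e (agreeB σ e) := by
    intro σ
    rw [hX σ]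
    unfold cfnWeight
    rw [mul_assoc]
    congr 1
    have hP2 : ∏ e ∈ P, pmVal (agreeB σ e)
        = ∏ e ∈ E, (if e ∈ P then pmVal (agreeB σ e) else 1) := by
      rw [← Finset.prod_subset hPE (fun e _ he => if_neg he)]
      exact Finset.prod_congr rfl fun e he => (if_pos he).symm
    rw [hP2, ← Finset.prod_mul_distrib]
    refine Finset.prod_congr rfl fun e he => ?_
    rw [cfnEdgeFactor_eq_agree]
  calc ∑ σ : V → Bool, cfnWeight G d σ * (pmVal (σ u) * pmVal (σ v))
      = ∑ σ : V → Bool, (1 / 2) * ∏ e ∈ E, g e (agreeB σ e) :=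
        Finset.sum_congr rfl fun σ _ => hterm σ
    _ = (1 / 2) * ∑ σ : V → Bool, ∏ e ∈ E, g e (agreeB σ e) := by rw [← Finset.mul_sum]
    _ = (1 / 2) * (2 * ∏ e ∈ E, (g e true + g e false)) := by rw [sum_prod_agree hT u g]
    _ = ∏ e ∈ E, (g e true + g e false) := by ring
    _ = ∏ e ∈ E, (if e ∈ P then c e else 1) := by
        refine Finset.prod_congr rfl fun e he => ?_
        simp only [hgdef]
        by_cases hep : e ∈ P <;> simp [hep, pmVal] <;> ring
    _ = ∏ e ∈ P, c e := by
        rw [← Finset.prod_subset hPE (fun e _ he => if_neg he)]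
        exact Finset.prod_congr rfl fun e he => if_pos he
    _ = (p.edges.map c).prod := by rw [hPdef, List.prod_toFinset _ hp.edges_nodup]
    _ = Real.exp (-2 * (p.edges.map d).sum) := list_exp_prod d p.edges

end Aux

/-! ### Chernoff-type bounds over finite sums -/

section Chernoff

lemma exp_le_quadratic {s : ℝ} (hs : |s| ≤ 1) : Real.exp s ≤ 1 + s + s ^ 2 := by
  have h := Real.exp_bound hs (by norm_num : 0 < 2)
  have hsum : ∑ i ∈ Finset.range 2, s ^ i / (Nat.factorial i) = 1 + s := by
    simp [Finset.sum_range_succ]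
  rw [hsum] at h
  have h' := (abs_le.1 h).2
  norm_num [Nat.factorial] at h'
  nlinarith [sq_abs s, sq_nonneg s, h']

lemma mgf_bound {Ω : Type*} [Fintype Ω] (w X : Ω → ℝ) (hw : ∀ x, 0 ≤ w x)
    (hw1 : ∑ x, w x = 1) (hX : ∀ x, X x = 1 ∨ X x = -1) {s : ℝ} (hs : |s| ≤ 1) (θ : ℝ)
    (hθ : ∑ x, w x * X x = θ) :
    ∑ x, w x * Real.exp (s * X x) ≤ Real.exp (s * θ + s ^ 2) := by
  have key : ∀ x, Real.exp (s * X x) ≤ 1 + s * X x + s ^ 2 := by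
    intro x
    rcases hX x with h | h <;> rw [h]
    · simpa using exp_le_quadratic hs
    · have hs' : |(-s)| ≤ 1 := by rwa [abs_neg]
      have h2 := exp_le_quadratic hs'
      rw [mul_neg_one]
      nlinarith [h2]
  calc ∑ x, w x * Real.exp (s * X x) ≤ ∑ x, w x * (1 + s * X x + s ^ 2) :=
        Finset.sum_le_sum fun x _ => mul_le_mul_of_nonneg_left (key x) (hw x)
    _ = (∑ x, w x) + s * (∑ x, w x * X x) + s ^ 2 * (∑ x, w x) := by
        rw [Finset.mul_sum, Finset.mul_sum, ← Finset.sum_add_distrib, ← Finset.sum_add_distrib]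
        exact Finset.sum_congr rfl fun x _ => by ring
    _ = 1 + (s * θ + s ^ 2) := by rw [hw1, hθ]; ring
    _ ≤ Real.exp (s * θ + s ^ 2) := by
        have := Real.add_one_le_exp (s * θ + s ^ 2); linarith

lemma tail_bound {Ω : Type*} [Fintype Ω] (w X : Ω → ℝ) (hw : ∀ x, 0 ≤ w x)
    (k : ℕ) (s b : ℝ) (P : (Fin k → Ω) → Prop)
    (hP : ∀ xs, P xs → s * b ≤ ∑ t, s * X (xs t)) :
    ∑ xs : Fin k → Ω, (∏ t, w (xs t)) * (if P xs then 1 else 0)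
      ≤ Real.exp (-(s * b)) * (∑ x, w x * Real.exp (s * X x)) ^ k := by
  have step1 : ∀ xs : Fin k → Ω, (∏ t, w (xs t)) * (if P xs then 1 else 0)
      ≤ (∏ t, w (xs t)) * Real.exp ((∑ t, s * X (xs t)) - s * b) := by
    intro xs
    have hw' : 0 ≤ ∏ t, w (xs t) := Finset.prod_nonneg fun t _ => hw _
    by_cases h : P xs
    · rw [if_pos h]
      exact mul_le_mul_of_nonneg_left (Real.one_le_exp (by linarith [hP xs h])) hw'
    · rw [if_neg h, mul_zero]
      exact mul_nonneg hw' (Real.exp_pos _).le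
  calc ∑ xs : Fin k → Ω, (∏ t, w (xs t)) * (if P xs then 1 else 0)
      ≤ ∑ xs : Fin k → Ω, (∏ t, w (xs t)) * Real.exp ((∑ t, s * X (xs t)) - s * b) :=
        Finset.sum_le_sum fun xs _ => step1 xs
    _ = Real.exp (-(s * b)) * ∑ xs : Fin k → Ω, ∏ t, (w (xs t) * Real.exp (s * X (xs t))) := by
        rw [Finset.mul_sum]
        refine Finset.sum_congr rfl fun xs _ => ?_
        rw [Finset.prod_mul_distrib, ← Real.exp_sum, sub_eq_add_neg, Real.exp_add]
        ring
    _ = Real.exp (-(s * b)) * (∑ x, w x * Real.exp (s * X x)) ^ k := by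
        rw [Fintype.sum_pow]

lemma abs_log_sub_log_le {m a b : ℝ} (hm : 0 < m) (ha : m ≤ a) (hb : m ≤ b) :
    |Real.log a - Real.log b| ≤ |a - b| / m := by
  wlog h : b ≤ a generalizing a b
  · rw [abs_sub_comm, abs_sub_comm a b]; exact this hb ha (le_of_not_ge h)
  have ha0 : 0 < a := lt_of_lt_of_le hm ha
  have hb0 : 0 < b := lt_of_lt_of_le hm hb
  have hlog : Real.log b ≤ Real.log a := Real.log_le_log hb0 h
  rw [abs_of_nonneg (sub_nonneg.2 hlog), abs_of_nonneg (sub_nonneg.2 h)]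
  rw [← Real.log_div ha0.ne' hb0.ne']
  have h1 : Real.log (a / b) ≤ a / b - 1 := Real.log_le_sub_one_of_pos (div_pos ha0 hb0)
  have h2 : a / b - 1 = (a - b) / b := by field_simp
  have h3 : (a - b) / b ≤ (a - b) / m := by
    apply div_le_div_of_nonneg_left (by linarith) hm hb
  linarith

end Chernoff

/-- **Accuracy of the distance estimator `Dist` between two leaves.**
Fix `γ > 0`. For all `ε > 0` and `M > 0` there is a constant `c = c(ε,M,γ) > 0`
such that for every finite tree `G` with nonnegative edge lengths, every pair of
leaves `u, v` at tree distance `d(u,v) < M` (the distance being the sum of the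
edge lengths along the unique path `p` from `u` to `v`), every `n ≥ 2` and every
`k ≥ c·log n`: if `σ¹,…,σᵏ` are i.i.d. characters of the CFN model on `G` (the
probability below sums the i.i.d. product weight over all `k`-tuples of full
assignments), then with probability at least `1 − n^{−γ}` the empirical
correlation `A = (1/k) Σ_t σ_u^t σ_v^t` is positive and the distance estimate
`Dist(σ_u,σ_v) = −(1/2) ln A` satisfies `|d(u,v) − Dist(σ_u,σ_v)| < ε`
(positivity of `A` says exactly that `Dist ≠ +∞`). -/
theorem distance_estimate_accuracy
    (γ : ℝ) (hγ : 0 < γ) :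
    ∀ ε > (0 : ℝ), ∀ M > (0 : ℝ), ∃ c > (0 : ℝ),
      ∀ (V : Type) [Fintype V] [DecidableEq V] (G : SimpleGraph V),
        G.IsTree →
        ∀ (d : Sym2 V → ℝ), (∀ e ∈ G.edgeSet, 0 ≤ d e) →
        ∀ (u v : V),
          (G.neighborSet u).ncard = 1 → (G.neighborSet v).ncard = 1 →
          ∀ (p : G.Walk u v), p.IsPath → (p.edges.map d).sum < M →
          ∀ (n k : ℕ), 2 ≤ n → c * Real.log n ≤ k →
            (1 : ℝ) - (n : ℝ) ^ (-γ) ≤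
              ∑ xs : Fin k → (V → Bool),
                (∏ t, cfnWeight G d (xs t)) *
                  (if 0 < (1 / (k : ℝ)) * ∑ t, pmVal (xs t u) * pmVal (xs t v) ∧
                      |(p.edges.map d).sum -
                        -((1 / 2) *
                          Real.log ((1 / (k : ℝ)) * ∑ t, pmVal (xs t u) * pmVal (xs t v)))| < ε
                   then 1 else 0) := by
  intro ε hε M hM
  set q : ℝ := Real.exp (-2 * M) with hqdef
  have hq0 : 0 < q := Real.exp_pos _
  have hq1 : q < 1 := by
    rw [hqdef, ← Real.exp_zero]
    exact Real.exp_lt_exp.2 (by linarith)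
  have hmin0 : 0 < min 1 ε := lt_min one_pos hε
  have hmin1 : min 1 ε ≤ 1 := min_le_left _ _
  set δ : ℝ := q / 2 * min 1 ε with hδdef
  have hδ0 : 0 < δ := mul_pos (by linarith) hmin0
  have hδq : δ ≤ q / 2 := by nlinarith
  have hδ1 : δ ≤ 1 / 2 := by nlinarith
  refine ⟨4 * (γ + 1) / δ ^ 2, by positivity, ?_⟩
  intro V _ _ G hT d hd u v hu hv p hp hD n k hn hk
  set D := (p.edges.map d).sum with hDdef
  have hD0 : 0 ≤ D := by
    apply List.sum_nonneg
    intro x hx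
    rw [List.mem_map] at hx
    obtain ⟨e, he, rfl⟩ := hx
    exact hd e (p.edges_subset_edgeSet he)
  set θ : ℝ := Real.exp (-2 * D) with hθdef
  have hθq : q < θ := Real.exp_lt_exp.2 (by linarith)
  have hθ2 : q / 2 ≤ θ := by linarith
  have hw : ∀ σ : V → Bool, 0 ≤ cfnWeight G d σ := cfnWeight_nonneg d hd
  have hw1 : ∑ σ : V → Bool, cfnWeight G d σ = 1 := sum_cfnWeight hT u d
  have hXpm : ∀ σ : V → Bool,
      pmVal (σ u) * pmVal (σ v) = 1 ∨ pmVal (σ u) * pmVal (σ v) = -1 := by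
    intro σ; cases σ u <;> cases σ v <;> norm_num [pmVal]
  have hmean : ∑ σ : V → Bool, cfnWeight G d σ * (pmVal (σ u) * pmVal (σ v)) = θ :=
    sum_cfnWeight_corr hT d p hp
  have hn1 : (1 : ℝ) < n := by exact_mod_cast (by omega : (1 : ℕ) < n)
  have hn2 : (2 : ℝ) ≤ n := by exact_mod_cast hn
  have hnpos : (0 : ℝ) < n := by linarith
  have hlogn : 0 < Real.log n := Real.log_pos hn1
  have hc : 0 < 4 * (γ + 1) / δ ^ 2 := by positivity
  have hkR : 0 < (k : ℝ) := lt_of_lt_of_le (mul_pos hc hlogn) hk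
  set lam : ℝ := δ / 2 with hlamdef
  have hlam0 : 0 < lam := by rw [hlamdef]; linarith
  have hlamabs : |lam| ≤ 1 := by rw [abs_of_pos hlam0, hlamdef]; linarith
  have hlamabs' : |(-lam)| ≤ 1 := by rwa [abs_neg]
  -- upper tail
  have tailp : ∑ xs : Fin k → (V → Bool), (∏ t, cfnWeight G d (xs t)) *
        (if (k : ℝ) * (θ + δ) ≤ ∑ t, pmVal (xs t u) * pmVal (xs t v) then 1 else 0)
      ≤ Real.exp (-((k : ℝ) * (δ ^ 2 / 4))) := by
    have h1 := tail_bound (cfnWeight G d) (fun σ => pmVal (σ u) * pmVal (σ v)) hw k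
      lam ((k : ℝ) * (θ + δ))
      (fun xs => (k : ℝ) * (θ + δ) ≤ ∑ t, pmVal (xs t u) * pmVal (xs t v))
      (fun xs hxs => by
        have h2 : ∑ t, lam * (pmVal (xs t u) * pmVal (xs t v))
            = lam * ∑ t, pmVal (xs t u) * pmVal (xs t v) := by rw [Finset.mul_sum]
        calc lam * ((k : ℝ) * (θ + δ)) ≤ lam * ∑ t, pmVal (xs t u) * pmVal (xs t v) :=
              mul_le_mul_of_nonneg_left hxs hlam0.le
          _ = _ := h2.symm)
    have h2 := mgf_bound (cfnWeight G d) (fun σ => pmVal (σ u) * pmVal (σ v)) hw hw1 hXpm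
      hlamabs θ hmean
    refine le_trans h1 ?_
    have h3 : (∑ x : V → Bool, cfnWeight G d x *
          Real.exp (lam * (pmVal (x u) * pmVal (x v)))) ^ k
        ≤ Real.exp (lam * θ + lam ^ 2) ^ k :=
      pow_le_pow_left₀ (Finset.sum_nonneg fun x _ =>
        mul_nonneg (hw x) (Real.exp_pos _).le) h2 k
    calc Real.exp (-(lam * ((k : ℝ) * (θ + δ)))) * (∑ x : V → Bool, cfnWeight G d x *
            Real.exp (lam * (pmVal (x u) * pmVal (x v)))) ^ k
        ≤ Real.exp (-(lam * ((k : ℝ) * (θ + δ)))) * Real.exp (lam * θ + lam ^ 2) ^ k :=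
          mul_le_mul_of_nonneg_left h3 (Real.exp_pos _).le
      _ = Real.exp (-(lam * ((k : ℝ) * (θ + δ))) + (k : ℝ) * (lam * θ + lam ^ 2)) := by
          rw [← Real.exp_nat_mul, ← Real.exp_add]
      _ = Real.exp (-((k : ℝ) * (δ ^ 2 / 4))) := by
          congr 1
          rw [hlamdef]; ring
  -- lower tail
  have tailm : ∑ xs : Fin k → (V → Bool), (∏ t, cfnWeight G d (xs t)) *
        (if (∑ t, pmVal (xs t u) * pmVal (xs t v)) ≤ (k : ℝ) * (θ - δ) then 1 else 0)
      ≤ Real.exp (-((k : ℝ) * (δ ^ 2 / 4))) := by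
    have h1 := tail_bound (cfnWeight G d) (fun σ => pmVal (σ u) * pmVal (σ v)) hw k
      (-lam) ((k : ℝ) * (θ - δ))
      (fun xs => (∑ t, pmVal (xs t u) * pmVal (xs t v)) ≤ (k : ℝ) * (θ - δ))
      (fun xs hxs => by
        have h2 : ∑ t, (-lam) * (pmVal (xs t u) * pmVal (xs t v))
            = (-lam) * ∑ t, pmVal (xs t u) * pmVal (xs t v) := by rw [Finset.mul_sum]
        calc (-lam) * ((k : ℝ) * (θ - δ))
            ≤ (-lam) * ∑ t, pmVal (xs t u) * pmVal (xs t v) :=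
              mul_le_mul_of_nonpos_left hxs (by linarith)
          _ = _ := h2.symm)
    have h2 := mgf_bound (cfnWeight G d) (fun σ => pmVal (σ u) * pmVal (σ v)) hw hw1 hXpm
      hlamabs' θ hmean
    refine le_trans h1 ?_
    have h3 : (∑ x : V → Bool, cfnWeight G d x *
          Real.exp ((-lam) * (pmVal (x u) * pmVal (x v)))) ^ k
        ≤ Real.exp ((-lam) * θ + (-lam) ^ 2) ^ k :=
      pow_le_pow_left₀ (Finset.sum_nonneg fun x _ =>
        mul_nonneg (hw x) (Real.exp_pos _).le) h2 k
    calc Real.exp (-((-lam) * ((k : ℝ) * (θ - δ)))) * (∑ x : V → Bool, cfnWeight G d x *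
            Real.exp ((-lam) * (pmVal (x u) * pmVal (x v)))) ^ k
        ≤ Real.exp (-((-lam) * ((k : ℝ) * (θ - δ)))) * Real.exp ((-lam) * θ + (-lam) ^ 2) ^ k :=
          mul_le_mul_of_nonneg_left h3 (Real.exp_pos _).le
      _ = Real.exp (-((-lam) * ((k : ℝ) * (θ - δ))) + (k : ℝ) * ((-lam) * θ + (-lam) ^ 2)) := by
          rw [← Real.exp_nat_mul, ← Real.exp_add]
      _ = Real.exp (-((k : ℝ) * (δ ^ 2 / 4))) := by
          congr 1
          rw [hlamdef]; ring
  -- numeric bound on the tails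
  have hkey : Real.exp (-((k : ℝ) * (δ ^ 2 / 4))) ≤ (1 / 2) * (n : ℝ) ^ (-γ) := by
    have hkD : (γ + 1) * Real.log n ≤ (k : ℝ) * (δ ^ 2 / 4) := by
      have h1 : 4 * (γ + 1) / δ ^ 2 * Real.log n * (δ ^ 2 / 4) ≤ (k : ℝ) * (δ ^ 2 / 4) :=
        mul_le_mul_of_nonneg_right hk (by positivity)
      calc (γ + 1) * Real.log n = 4 * (γ + 1) / δ ^ 2 * Real.log n * (δ ^ 2 / 4) := by
            field_simp
        _ ≤ (k : ℝ) * (δ ^ 2 / 4) := h1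
    have h1 : Real.exp (-((k : ℝ) * (δ ^ 2 / 4))) ≤ Real.exp (-((γ + 1) * Real.log n)) :=
      Real.exp_le_exp.2 (by linarith)
    have h2 : Real.exp (-((γ + 1) * Real.log n)) = (n : ℝ) ^ (-γ) * (n : ℝ)⁻¹ := by
      have e1 : -((γ + 1) * Real.log n) = Real.log n * (-γ) + -(Real.log n) := by ring
      rw [e1, Real.exp_add, Real.exp_neg, Real.exp_log hnpos, Real.rpow_def_of_pos hnpos]
    have h3 : (n : ℝ)⁻¹ ≤ 1 / 2 := by
      rw [inv_eq_one_div]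
      apply div_le_div_of_nonneg_left (by norm_num) (by norm_num) hn2
    have h4 : (0 : ℝ) < (n : ℝ) ^ (-γ) := Real.rpow_pos_of_pos hnpos _
    calc Real.exp (-((k : ℝ) * (δ ^ 2 / 4))) ≤ (n : ℝ) ^ (-γ) * (n : ℝ)⁻¹ := by rw [← h2]; exact h1
      _ ≤ (n : ℝ) ^ (-γ) * (1 / 2) := mul_le_mul_of_nonneg_left h3 h4.le
      _ = (1 / 2) * (n : ℝ) ^ (-γ) := by ring
  -- the good event holds when both tails fail
  have himp : ∀ xs : Fin k → (V → Bool),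
      ¬ ((k : ℝ) * (θ + δ) ≤ ∑ t, pmVal (xs t u) * pmVal (xs t v)) →
      ¬ ((∑ t, pmVal (xs t u) * pmVal (xs t v)) ≤ (k : ℝ) * (θ - δ)) →
      (0 < (1 / (k : ℝ)) * ∑ t, pmVal (xs t u) * pmVal (xs t v) ∧
        |D - -((1 / 2) *
          Real.log ((1 / (k : ℝ)) * ∑ t, pmVal (xs t u) * pmVal (xs t v)))| < ε) := by
    intro xs hpp hpm
    push_neg at hpp hpm
    set S := ∑ t, pmVal (xs t u) * pmVal (xs t v) with hS
    have hub : (1 / (k : ℝ)) * S < θ + δ := by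
      have h1 : (1 / (k : ℝ)) * S < (1 / (k : ℝ)) * ((k : ℝ) * (θ + δ)) :=
        mul_lt_mul_of_pos_left hpp (by positivity)
      have h2 : (1 / (k : ℝ)) * ((k : ℝ) * (θ + δ)) = θ + δ := by field_simp
      linarith
    have hlb : θ - δ < (1 / (k : ℝ)) * S := by
      have h1 : (1 / (k : ℝ)) * ((k : ℝ) * (θ - δ)) < (1 / (k : ℝ)) * S :=
        mul_lt_mul_of_pos_left hpm (by positivity)
      have h2 : (1 / (k : ℝ)) * ((k : ℝ) * (θ - δ)) = θ - δ := by field_simp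
      linarith
    have hAq : q / 2 < (1 / (k : ℝ)) * S := by linarith
    have hA0 : 0 < (1 / (k : ℝ)) * S := by linarith
    refine ⟨hA0, ?_⟩
    have hDlog : D = -(1 / 2 * Real.log θ) := by rw [hθdef, Real.log_exp]; ring
    have habs : |(1 / (k : ℝ)) * S - θ| < δ := abs_sub_lt_iff.2 ⟨by linarith, by linarith⟩
    have hlog : |Real.log ((1 / (k : ℝ)) * S) - Real.log θ| ≤ |(1 / (k : ℝ)) * S - θ| / (q / 2) :=
      abs_log_sub_log_le (by linarith) hAq.le hθ2
    have hltm : |(1 / (k : ℝ)) * S - θ| / (q / 2) < δ / (q / 2) :=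
      (div_lt_div_iff_of_pos_right (by linarith)).2 habs
    have hδq2 : δ / (q / 2) = min 1 ε := by rw [hδdef]; field_simp
    have h5 : |Real.log ((1 / (k : ℝ)) * S) - Real.log θ| < ε := by
      have := min_le_right 1 ε
      calc |Real.log ((1 / (k : ℝ)) * S) - Real.log θ|
          ≤ |(1 / (k : ℝ)) * S - θ| / (q / 2) := hlog
        _ < δ / (q / 2) := hltm
        _ = min 1 ε := hδq2
        _ ≤ ε := min_le_right 1 ε
    have heq : D - -((1 / 2) * Real.log ((1 / (k : ℝ)) * S))
        = (1 / 2) * (Real.log ((1 / (k : ℝ)) * S) - Real.log θ) := by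
      rw [hDlog]; ring
    rw [heq, abs_mul, abs_of_pos (by norm_num : (0:ℝ) < 1/2)]
    have := abs_nonneg (Real.log ((1 / (k : ℝ)) * S) - Real.log θ)
    linarith
  -- assemble
  have hWsum : ∑ xs : Fin k → (V → Bool), (∏ t, cfnWeight G d (xs t)) = 1 := by
    rw [← Fintype.sum_pow, hw1, one_pow]
  have hpoint : ∀ xs : Fin k → (V → Bool),
      (∏ t, cfnWeight G d (xs t)) -
        ((∏ t, cfnWeight G d (xs t)) *
            (if (k : ℝ) * (θ + δ) ≤ ∑ t, pmVal (xs t u) * pmVal (xs t v) then 1 else 0) +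
          (∏ t, cfnWeight G d (xs t)) *
            (if (∑ t, pmVal (xs t u) * pmVal (xs t v)) ≤ (k : ℝ) * (θ - δ) then 1 else 0))
      ≤ (∏ t, cfnWeight G d (xs t)) *
          (if 0 < (1 / (k : ℝ)) * ∑ t, pmVal (xs t u) * pmVal (xs t v) ∧
              |D - -((1 / 2) *
                Real.log ((1 / (k : ℝ)) * ∑ t, pmVal (xs t u) * pmVal (xs t v)))| < ε
           then 1 else 0) := by
    intro xs
    have hW0 : 0 ≤ ∏ t, cfnWeight G d (xs t) := Finset.prod_nonneg fun t _ => hw _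
    by_cases hg : (0 < (1 / (k : ℝ)) * ∑ t, pmVal (xs t u) * pmVal (xs t v) ∧
        |D - -((1 / 2) *
          Real.log ((1 / (k : ℝ)) * ∑ t, pmVal (xs t u) * pmVal (xs t v)))| < ε)
    · rw [if_pos hg]
      have h1 : (0:ℝ) ≤ (∏ t, cfnWeight G d (xs t)) *
          (if (k : ℝ) * (θ + δ) ≤ ∑ t, pmVal (xs t u) * pmVal (xs t v) then 1 else 0) :=
        mul_nonneg hW0 (by split <;> norm_num)
      have h2 : (0:ℝ) ≤ (∏ t, cfnWeight G d (xs t)) *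
          (if (∑ t, pmVal (xs t u) * pmVal (xs t v)) ≤ (k : ℝ) * (θ - δ) then 1 else 0) :=
        mul_nonneg hW0 (by split <;> norm_num)
      linarith
    · rw [if_neg hg, mul_zero]
      have hor : ((k : ℝ) * (θ + δ) ≤ ∑ t, pmVal (xs t u) * pmVal (xs t v)) ∨
          ((∑ t, pmVal (xs t u) * pmVal (xs t v)) ≤ (k : ℝ) * (θ - δ)) := by
        by_contra hcon
        push_neg at hcon
        exact hg (himp xs (by intro h; exact absurd h (not_le.2 hcon.1))
          (by intro h; exact absurd h (not_le.2 hcon.2)))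
      rcases hor with h | h
      · rw [if_pos h, mul_one]
        have h2 : (0:ℝ) ≤ (∏ t, cfnWeight G d (xs t)) *
            (if (∑ t, pmVal (xs t u) * pmVal (xs t v)) ≤ (k : ℝ) * (θ - δ) then 1 else 0) :=
          mul_nonneg hW0 (by split <;> norm_num)
        linarith
      · rw [if_pos h, mul_one]
        have h1 : (0:ℝ) ≤ (∏ t, cfnWeight G d (xs t)) *
            (if (k : ℝ) * (θ + δ) ≤ ∑ t, pmVal (xs t u) * pmVal (xs t v) then 1 else 0) :=
          mul_nonneg hW0 (by split <;> norm_num)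
        linarith
  calc (1 : ℝ) - (n : ℝ) ^ (-γ)
      = 1 - ((1 / 2) * (n : ℝ) ^ (-γ) + (1 / 2) * (n : ℝ) ^ (-γ)) := by ring
    _ ≤ (∑ xs : Fin k → (V → Bool), (∏ t, cfnWeight G d (xs t))) -
          ((∑ xs : Fin k → (V → Bool), (∏ t, cfnWeight G d (xs t)) *
              (if (k : ℝ) * (θ + δ) ≤ ∑ t, pmVal (xs t u) * pmVal (xs t v) then 1 else 0)) +
            (∑ xs : Fin k → (V → Bool), (∏ t, cfnWeight G d (xs t)) *
              (if (∑ t, pmVal (xs t u) * pmVal (xs t v)) ≤ (k : ℝ) * (θ - δ)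
               then 1 else 0))) := by
        rw [hWsum]
        have hb1 := le_trans tailp hkey
        have hb2 := le_trans tailm hkey
        linarith
    _ = ∑ xs : Fin k → (V → Bool),
          ((∏ t, cfnWeight G d (xs t)) -
            ((∏ t, cfnWeight G d (xs t)) *
                (if (k : ℝ) * (θ + δ) ≤ ∑ t, pmVal (xs t u) * pmVal (xs t v) then 1 else 0) +
              (∏ t, cfnWeight G d (xs t)) *
                (if (∑ t, pmVal (xs t u) * pmVal (xs t v)) ≤ (k : ℝ) * (θ - δ)
                 then 1 else 0))) := by
        rw [Finset.sum_sub_distrib, Finset.sum_add_distrib]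
    _ ≤ ∑ xs : Fin k → (V → Bool),
          (∏ t, cfnWeight G d (xs t)) *
            (if 0 < (1 / (k : ℝ)) * ∑ t, pmVal (xs t u) * pmVal (xs t v) ∧
                |D - -((1 / 2) *
                  Real.log ((1 / (k : ℝ)) * ∑ t, pmVal (xs t u) * pmVal (xs t v)))| < ε
             then 1 else 0) := Finset.sum_le_sum fun xs _ => hpoint xs
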